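/- Let N≥2, let λ_1,…,λ_N>0 satisfy λ_N > max_{1≤i≤N−1} λ_i, and let w_i:ℕ→(0,∞) satisfy w_i(n+1)/w_i(n) → 1 as n→∞ for each i. For K∈ℕ let μ^K be the probability measure on {η∈ℕ^N : ∑_i η_i = K} with μ^K(η) proportional to ∏_{i=1}^N w_i(η_i) λ_i^{η_i}. Then for every δ∈(0,1), μ^K(η_N ≤ (1−δ)K) → 0 as K→∞; moreover, for any random variables η^K with law μ^K on a common probability space, η^K_N/K → 1 almost surely. -/

import Mathlib

open Filter Topology MeasureTheory

lemma aux_expBound (w : ℕ → ℝ) (hw : ∀ n, 0 < w n)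
    (h : Tendsto (fun n => w (n + 1) / w n) atTop (𝓝 1)) {α : ℝ} (hα : 0 < α) :
    ∃ C, 0 < C ∧ ∀ n, w n ≤ C * Real.exp (α * n) := by
  have h1 : (1:ℝ) < Real.exp α := by
    have := Real.exp_lt_exp.mpr hα
    simpa using this
  obtain ⟨n₀, hn₀⟩ := eventually_atTop.mp (h.eventually_lt_const h1)
  set g : ℕ → ℝ := fun n => w n * Real.exp (-(α * n)) with hg
  set C : ℝ := (Finset.range (n₀ + 1)).sup' (by simp) g with hC
  have hCpos : 0 < C := by
    have h0 : g 0 ≤ C := Finset.le_sup' g (Finset.mem_range.mpr (Nat.succ_pos n₀))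
    have : 0 < g 0 := mul_pos (hw 0) (Real.exp_pos _)
    linarith
  have hstep : ∀ n, n₀ ≤ n → g (n + 1) ≤ g n := by
    intro n hn
    have hr := hn₀ n hn
    have hwn := hw n
    have h2 : w (n + 1) ≤ Real.exp α * w n := by
      rw [div_lt_iff₀ hwn] at hr
      linarith
    show w (n + 1) * Real.exp (-(α * ((n:ℕ) + 1 : ℕ))) ≤ w n * Real.exp (-(α * n))
    calc w (n + 1) * Real.exp (-(α * ((n:ℕ) + 1 : ℕ)))
        ≤ (Real.exp α * w n) * Real.exp (-(α * ((n:ℕ) + 1 : ℕ))) :=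
          mul_le_mul_of_nonneg_right h2 (Real.exp_pos _).le
      _ = w n * (Real.exp α * Real.exp (-(α * ((n:ℕ) + 1 : ℕ)))) := by ring
      _ = w n * Real.exp (-(α * n)) := by
          rw [← Real.exp_add]
          congr 1
          push_cast
          ring
  have hgC : ∀ n, g n ≤ C := by
    intro n
    rcases le_or_gt n n₀ with h' | h'
    · exact Finset.le_sup' g (Finset.mem_range.mpr (Nat.lt_succ_of_le h'))
    · have key : ∀ m, n₀ ≤ m → g m ≤ C := by
        intro m
        induction m with
        | zero => intro _; exact Finset.le_sup' g (Finset.mem_range.mpr (by omega))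
        | succ k ih =>
          intro hm
          rcases le_or_gt n₀ k with hk | hk
          · exact le_trans (hstep k hk) (ih hk)
          · exact Finset.le_sup' g (Finset.mem_range.mpr (by omega))
      exact key n h'.le
  refine ⟨C, hCpos, fun n => ?_⟩
  have h4 := hgC n
  have hE : (0:ℝ) < Real.exp (α * n) := Real.exp_pos _
  have h5 : w n * Real.exp (-(α * n)) * Real.exp (α * n) ≤ C * Real.exp (α * n) :=
    mul_le_mul_of_nonneg_right h4 hE.le
  calc w n = w n * Real.exp (-(α * n)) * Real.exp (α * n) := by
        rw [mul_assoc, ← Real.exp_add]; simp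
    _ ≤ C * Real.exp (α * n) := h5

lemma aux_expLower (w : ℕ → ℝ) (hw : ∀ n, 0 < w n)
    (h : Tendsto (fun n => w (n + 1) / w n) atTop (𝓝 1)) {α : ℝ} (hα : 0 < α) :
    ∃ c, 0 < c ∧ ∀ n : ℕ, c * Real.exp (-(α * n)) ≤ w n := by
  have hinv : Tendsto (fun n => (w (n + 1))⁻¹ / (w n)⁻¹) atTop (𝓝 1) := by
    have heq : (fun n => (w (n + 1))⁻¹ / (w n)⁻¹) = fun n => (w (n + 1) / w n)⁻¹ := by
      funext n
      field_simp
    rw [heq]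
    simpa using h.inv₀ one_ne_zero
  obtain ⟨C, hCpos, hC⟩ := aux_expBound (fun n => (w n)⁻¹) (fun n => inv_pos.mpr (hw n)) hinv hα
  refine ⟨C⁻¹, inv_pos.mpr hCpos, fun n => ?_⟩
  have h2 : (w n)⁻¹ ≤ C * Real.exp (α * n) := hC n
  have h3 : (C * Real.exp (α * n))⁻¹ ≤ w n := by
    rw [← inv_inv (w n)]
    exact inv_anti₀ (inv_pos.mpr (hw n)) h2
  calc C⁻¹ * Real.exp (-(α * n)) = (C * Real.exp (α * n))⁻¹ := by
        rw [mul_inv, Real.exp_neg]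
    _ ≤ w n := h3

lemma aux_finite (N K : ℕ) : Finite {ξ : Fin N → ℕ // ∑ i, ξ i = K} := by
  apply Finite.of_injective (β := Fin N → Fin (K + 1))
    (fun ξ i => ⟨ξ.1 i, Nat.lt_succ_of_le (le_of_le_of_eq
      (Finset.single_le_sum (fun j _ => Nat.zero_le (ξ.1 j)) (Finset.mem_univ i)) ξ.2)⟩)
  intro a b hab
  apply Subtype.ext
  funext i
  exact congrArg Fin.val (congrFun hab i)

lemma aux_finite2 (N K : ℕ) (Q : (Fin N → ℕ) → Prop) :
    Finite {ξ : Fin N → ℕ // (∑ i, ξ i = K) ∧ Q ξ} := by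
  haveI := aux_finite N K
  apply Finite.of_injective
    (β := {ξ : Fin N → ℕ // ∑ i, ξ i = K}) (fun ξ => ⟨ξ.1, ξ.2.1⟩)
  intro a b hab
  have h1 : a.1 = b.1 := congrArg (fun x : {ξ : Fin N → ℕ // ∑ i, ξ i = K} => x.1) hab
  exact Subtype.ext h1

noncomputable def condZ (N : ℕ) (lam : Fin N → ℝ) (w : Fin N → ℕ → ℝ) (K : ℕ) : ℝ :=
  ∑' ξ : {ξ : Fin N → ℕ // ∑ i, ξ i = K}, ∏ i, w i (ξ.1 i) * lam i ^ (ξ.1 i)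

noncomputable def condS (N : ℕ) (lam : Fin N → ℝ) (w : Fin N → ℕ → ℝ) (j : Fin N) (δ : ℝ)
    (K : ℕ) : ℝ :=
  ∑' ξ : {ξ : Fin N → ℕ // (∑ i, ξ i = K) ∧ ((ξ j : ℕ) : ℝ) ≤ (1 - δ) * K},
    ∏ i, w i (ξ.1 i) * lam i ^ (ξ.1 i)

lemma le_condZ (N K : ℕ) (lam : Fin N → ℝ) (hlam : ∀ i, 0 < lam i)
    (w : Fin N → ℕ → ℝ) (hw : ∀ i n, 0 < w i n) (ξ0 : Fin N → ℕ) (h : ∑ i, ξ0 i = K) :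
    (∏ i, w i (ξ0 i) * lam i ^ (ξ0 i)) ≤ condZ N lam w K := by
  haveI := aux_finite N K
  unfold condZ
  exact Summable.le_tsum (f := fun ξ : {ξ : Fin N → ℕ // ∑ i, ξ i = K} =>
      ∏ i, w i (ξ.1 i) * lam i ^ (ξ.1 i)) Summable.of_finite ⟨ξ0, h⟩ fun ξ _ =>
    Finset.prod_nonneg fun i _ => mul_nonneg (hw i _).le (pow_nonneg (hlam i).le _)

lemma condZ_pos (N K : ℕ) (hN : 0 < N) (lam : Fin N → ℝ) (hlam : ∀ i, 0 < lam i)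
    (w : Fin N → ℕ → ℝ) (hw : ∀ i n, 0 < w i n) : 0 < condZ N lam w K := by
  classical
  have h : ∑ i, (fun i => if i = (⟨0, hN⟩ : Fin N) then K else 0) i = K := by
    simp
  refine lt_of_lt_of_le ?_ (le_condZ N K lam hlam w hw _ h)
  exact Finset.prod_pos fun i _ => mul_pos (hw i _) (pow_pos (hlam i) _)

lemma condS_nonneg (N K : ℕ) (lam : Fin N → ℝ) (hlam : ∀ i, 0 < lam i)
    (w : Fin N → ℕ → ℝ) (hw : ∀ i n, 0 < w i n) (j : Fin N) (δ : ℝ) :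
    0 ≤ condS N lam w j δ K :=
  tsum_nonneg fun ξ =>
    Finset.prod_nonneg fun i _ => mul_nonneg (hw i _).le (pow_nonneg (hlam i).le _)

lemma key_bound (N : ℕ) (hN : 2 ≤ N) (lam : Fin N → ℝ) (hlam : ∀ i, 0 < lam i)
    (j : Fin N) (hj : ∀ i, i ≠ j → lam i < lam j)
    (w : Fin N → ℕ → ℝ) (hw : ∀ i n, 0 < w i n)
    (hsub : ∀ i, Tendsto (fun n : ℕ => w i (n + 1) / w i n) atTop (𝓝 1))
    (δ : ℝ) (hδ0 : 0 < δ) (hδ1 : δ < 1) :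
    ∃ A q : ℝ, 0 ≤ A ∧ 0 < q ∧ q < 1 ∧ ∀ K : ℕ,
      condS N lam w j δ K ≤ (A * (((K : ℝ) + 1) ^ N * q ^ K)) * condZ N lam w K := by
  classical
  obtain ⟨i₀, hi₀⟩ := Fintype.exists_ne_of_one_lt_card (by simp only [Fintype.card_fin]; omega) j
  set E : Finset (Fin N) := Finset.univ.erase j with hE
  have hi₀E : i₀ ∈ E := Finset.mem_erase.mpr ⟨hi₀, Finset.mem_univ _⟩
  have hEne : E.Nonempty := ⟨i₀, hi₀E⟩
  set ρ : ℝ := E.sup' hEne (fun i => lam i / lam j) with hρ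
  have hρpos : 0 < ρ := by
    rw [hρ]
    exact lt_of_lt_of_le (div_pos (hlam i₀) (hlam j))
      (Finset.le_sup' (fun i => lam i / lam j) hi₀E)
  have hρlt1 : ρ < 1 := by
    rw [hρ, Finset.sup'_lt_iff]
    intro i hi
    rw [div_lt_one (hlam j)]
    exact hj i (Finset.mem_erase.mp hi).1
  have hρle : ∀ i ∈ E, lam i ≤ ρ * lam j := by
    intro i hi
    have h1 : lam i / lam j ≤ ρ := by
      rw [hρ]
      exact Finset.le_sup' (fun i => lam i / lam j) hi
    calc lam i = (lam i / lam j) * lam j := (div_mul_cancel₀ (lam i) (hlam j).ne').symm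
      _ ≤ ρ * lam j := mul_le_mul_of_nonneg_right h1 (hlam j).le
  have hlog : Real.log ρ < 0 := Real.log_neg hρpos hρlt1
  set α : ℝ := δ * (-Real.log ρ) / 4 with hα
  have hαpos : 0 < α := div_pos (mul_pos hδ0 (by linarith)) (by norm_num)
  choose Cu hCupos hCu using fun i => aux_expBound (w i) (hw i) (hsub i) hαpos
  obtain ⟨c, hcpos, hc⟩ := aux_expLower (w j) (hw j) (hsub j) hαpos
  clear_value α
  set W0 : ℝ := ∏ i ∈ E, w i 0 with hW0
  have hW0pos : 0 < W0 := Finset.prod_pos fun i _ => hw i 0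
  set CP : ℝ := ∏ i, Cu i with hCP
  have hCPpos : 0 < CP := Finset.prod_pos fun i _ => hCupos i
  set q : ℝ := Real.exp (2 * α + δ * Real.log ρ) with hq
  have hqpos : 0 < q := Real.exp_pos _
  clear_value ρ
  have hqlt1 : q < 1 := by
    rw [hq, Real.exp_lt_one_iff]
    have h1 : 2 * α + δ * Real.log ρ = δ * Real.log ρ / 2 := by rw [hα]; ring
    have h2 := mul_neg_of_pos_of_neg hδ0 hlog
    linarith
  clear_value q CP W0
  have hAnn : (0:ℝ) ≤ CP / (c * W0) := by positivity
  refine ⟨CP / (c * W0), q, hAnn, hqpos, hqlt1, fun K => ?_⟩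
  -- lower bound on the partition function
  have hZlow : c * W0 * lam j ^ K * Real.exp (-(α * K)) ≤ condZ N lam w K := by
    set ξ0 : Fin N → ℕ := fun i => if i = j then K else 0 with hξ0
    have hsum0 : ∑ i, ξ0 i = K := by simp [hξ0]
    have h1 := le_condZ N K lam hlam w hw ξ0 hsum0
    have h2 : (∏ i, w i (ξ0 i) * lam i ^ (ξ0 i))
        = (w j K * lam j ^ K) * ∏ i ∈ E, (w i (ξ0 i) * lam i ^ (ξ0 i)) :=
      (Finset.mul_prod_erase Finset.univ _ (Finset.mem_univ j)).symm.trans (by simp [hξ0, hE])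
    have h3 : ∏ i ∈ E, (w i (ξ0 i) * lam i ^ (ξ0 i)) = W0 := by
      rw [hW0]
      refine Finset.prod_congr rfl fun i hi => ?_
      rw [hξ0]
      simp [(Finset.mem_erase.mp hi).1]
    have h4 : c * Real.exp (-(α * K)) ≤ w j K := hc K
    have h5 : c * W0 * lam j ^ K * Real.exp (-(α * K))
        ≤ (w j K * lam j ^ K) * W0 := by
      have := mul_le_mul_of_nonneg_right h4
        (mul_nonneg (pow_nonneg (hlam j).le K) hW0pos.le)
      calc c * W0 * lam j ^ K * Real.exp (-(α * K))
          = (c * Real.exp (-(α * K))) * (lam j ^ K * W0) := by ring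
        _ ≤ w j K * (lam j ^ K * W0) := this
        _ = (w j K * lam j ^ K) * W0 := by ring
    rw [h2, h3] at h1
    linarith
  -- upper bound on each term of the restricted sum
  haveI := aux_finite2 N K (fun ξ => ((ξ j : ℕ) : ℝ) ≤ (1 - δ) * K)
  letI : Fintype {ξ : Fin N → ℕ // (∑ i, ξ i = K) ∧ ((ξ j : ℕ) : ℝ) ≤ (1 - δ) * K} :=
    Fintype.ofFinite _
  set Tb : ℝ := CP * lam j ^ K * Real.exp (α * K + δ * K * Real.log ρ) with hTb
  clear_value Tb
  have hTbnn : 0 ≤ Tb := by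
    rw [hTb]
    exact mul_nonneg (mul_nonneg hCPpos.le (pow_nonneg (hlam j).le _)) (Real.exp_pos _).le
  have hterm : ∀ ξ : {ξ : Fin N → ℕ // (∑ i, ξ i = K) ∧ ((ξ j : ℕ) : ℝ) ≤ (1 - δ) * K},
      (∏ i, w i (ξ.1 i) * lam i ^ (ξ.1 i)) ≤ Tb := by
    rintro ⟨ξ, hξsum, hξj⟩
    have hKsplit : ξ j + ∑ i ∈ E, ξ i = K := by
      rw [hE, Finset.add_sum_erase _ _ (Finset.mem_univ j)]
      exact hξsum
    set m : ℕ := ∑ i ∈ E, ξ i with hm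
    have hmR : (ξ j : ℝ) + (m : ℝ) = (K : ℝ) := by exact_mod_cast congrArg (Nat.cast (R := ℝ)) hKsplit
    have hδKm : δ * K ≤ (m : ℝ) := by nlinarith [hξj]
    have hwpart : (∏ i, w i (ξ i)) ≤ CP * Real.exp (α * K) := by
      calc (∏ i, w i (ξ i)) ≤ ∏ i, (Cu i * Real.exp (α * ξ i)) :=
            Finset.prod_le_prod (fun i _ => (hw i _).le) (fun i _ => hCu i _)
        _ = CP * ∏ i, Real.exp (α * ξ i) := by rw [hCP]; exact Finset.prod_mul_distrib
        _ = CP * Real.exp (∑ i, α * (ξ i : ℝ)) := by rw [Real.exp_sum]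
        _ = CP * Real.exp (α * K) := by
            rw [← Finset.mul_sum, ← Nat.cast_sum, hξsum]
    have hlampart : (∏ i, lam i ^ ξ i) ≤ lam j ^ K * Real.exp (δ * K * Real.log ρ) := by
      have e1 : (∏ i, lam i ^ ξ i) = lam j ^ ξ j * ∏ i ∈ E, lam i ^ ξ i :=
        (Finset.mul_prod_erase Finset.univ _ (Finset.mem_univ j)).symm
      have e2 : (∏ i ∈ E, lam i ^ ξ i) ≤ ∏ i ∈ E, (ρ * lam j) ^ ξ i :=
        Finset.prod_le_prod (fun i _ => pow_nonneg (hlam i).le _)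
          (fun i hi => pow_le_pow_left₀ (hlam i).le (hρle i hi) _)
      have e3 : (∏ i ∈ E, (ρ * lam j) ^ ξ i) = (ρ * lam j) ^ m :=
        Finset.prod_pow_eq_pow_sum E ξ _
      have e4 : lam j ^ ξ j * (ρ * lam j) ^ m = lam j ^ K * ρ ^ m := by
        rw [mul_pow, ← hKsplit, pow_add]
        ring
      have e5 : ρ ^ m ≤ Real.exp (δ * K * Real.log ρ) := by
        have e51 : ρ ^ m = Real.exp ((m : ℝ) * Real.log ρ) := by
          rw [Real.exp_nat_mul, Real.exp_log hρpos]
        rw [e51, Real.exp_le_exp]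
        nlinarith [hδKm, hlog]
      calc (∏ i, lam i ^ ξ i) = lam j ^ ξ j * ∏ i ∈ E, lam i ^ ξ i := e1
        _ ≤ lam j ^ ξ j * ∏ i ∈ E, (ρ * lam j) ^ ξ i :=
            mul_le_mul_of_nonneg_left e2 (pow_nonneg (hlam j).le _)
        _ = lam j ^ K * ρ ^ m := by rw [e3, e4]
        _ ≤ lam j ^ K * Real.exp (δ * K * Real.log ρ) :=
            mul_le_mul_of_nonneg_left e5 (pow_nonneg (hlam j).le _)
    calc (∏ i, w i (ξ i) * lam i ^ (ξ i)) = (∏ i, w i (ξ i)) * (∏ i, lam i ^ ξ i) :=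
          Finset.prod_mul_distrib
      _ ≤ (CP * Real.exp (α * K)) * (lam j ^ K * Real.exp (δ * K * Real.log ρ)) := by
          apply mul_le_mul hwpart hlampart
            (Finset.prod_nonneg fun i _ => pow_nonneg (hlam i).le _)
            (by positivity)
      _ = Tb := by rw [hTb, Real.exp_add]; ring
  -- cardinality bound
  have hcard : (Fintype.card {ξ : Fin N → ℕ //
      (∑ i, ξ i = K) ∧ ((ξ j : ℕ) : ℝ) ≤ (1 - δ) * K} : ℝ) ≤ ((K : ℝ) + 1) ^ N := by
    have hinj : Function.Injective
        (fun (ξ : {ξ : Fin N → ℕ // (∑ i, ξ i = K) ∧ ((ξ j : ℕ) : ℝ) ≤ (1 - δ) * K})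
          (i : Fin N) => (⟨ξ.1 i, Nat.lt_succ_of_le (le_of_le_of_eq
            (Finset.single_le_sum (fun k _ => Nat.zero_le (ξ.1 k)) (Finset.mem_univ i))
            ξ.2.1)⟩ : Fin (K + 1))) := by
      intro a b hab
      apply Subtype.ext
      funext i
      exact congrArg Fin.val (congrFun hab i)
    have h1 := Fintype.card_le_of_injective _ hinj
    have h2 : Fintype.card (Fin N → Fin (K + 1)) = (K + 1) ^ N := by
      rw [Fintype.card_fun]
      simp
    rw [h2] at h1
    calc (Fintype.card {ξ : Fin N → ℕ //
          (∑ i, ξ i = K) ∧ ((ξ j : ℕ) : ℝ) ≤ (1 - δ) * K} : ℝ)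
        ≤ (((K + 1) ^ N : ℕ) : ℝ) := by exact_mod_cast h1
      _ = ((K : ℝ) + 1) ^ N := by push_cast; ring
  -- put everything together
  have hS : condS N lam w j δ K ≤ ((K : ℝ) + 1) ^ N * Tb := by
    rw [condS, tsum_fintype]
    calc (∑ ξ : {ξ : Fin N → ℕ // (∑ i, ξ i = K) ∧ ((ξ j : ℕ) : ℝ) ≤ (1 - δ) * K},
            ∏ i, w i (ξ.1 i) * lam i ^ (ξ.1 i))
        ≤ (Finset.univ.card : ℕ) • Tb := Finset.sum_le_card_nsmul _ _ _ (fun ξ _ => hterm ξ)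
      _ = (Fintype.card {ξ : Fin N → ℕ //
            (∑ i, ξ i = K) ∧ ((ξ j : ℕ) : ℝ) ≤ (1 - δ) * K} : ℝ) * Tb := by
          rw [nsmul_eq_mul]; rfl
      _ ≤ ((K : ℝ) + 1) ^ N * Tb := mul_le_mul_of_nonneg_right hcard hTbnn
  have hiden : ((K : ℝ) + 1) ^ N * Tb
      = ((CP / (c * W0)) * (((K : ℝ) + 1) ^ N * q ^ K))
        * (c * W0 * lam j ^ K * Real.exp (-(α * K))) := by
    have hexp : q ^ K * Real.exp (-(α * K)) = Real.exp (α * K + δ * K * Real.log ρ) := by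
      rw [hq, ← Real.exp_nat_mul, ← Real.exp_add]
      congr 1
      ring
    have h9 : ((CP / (c * W0)) * (((K : ℝ) + 1) ^ N * q ^ K))
        * (c * W0 * lam j ^ K * Real.exp (-(α * K)))
        = ((K : ℝ) + 1) ^ N * (CP * lam j ^ K * (q ^ K * Real.exp (-(α * K)))) := by
      field_simp
    rw [hTb, h9, hexp]
  calc condS N lam w j δ K ≤ ((K : ℝ) + 1) ^ N * Tb := hS
    _ = ((CP / (c * W0)) * (((K : ℝ) + 1) ^ N * q ^ K))
        * (c * W0 * lam j ^ K * Real.exp (-(α * K))) := hiden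
    _ ≤ ((CP / (c * W0)) * (((K : ℝ) + 1) ^ N * q ^ K)) * condZ N lam w K := by
        exact mul_le_mul_of_nonneg_left hZlow
          (mul_nonneg hAnn (mul_nonneg (by positivity) (pow_nonneg hqpos.le K)))

lemma bseq_tendsto {A q : ℝ} (N : ℕ) (hq0 : 0 < q) (hq1 : q < 1) :
    Tendsto (fun K : ℕ => A * (((K : ℝ) + 1) ^ N * q ^ K)) atTop (𝓝 0) := by
  have h1 := tendsto_pow_const_mul_const_pow_of_lt_one N hq0.le hq1
  have h2 : Tendsto (fun K : ℕ => (((K + 1 : ℕ)) : ℝ) ^ N * q ^ (K + 1)) atTop (𝓝 0) :=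
    h1.comp (tendsto_add_atTop_nat 1)
  have h3 : (fun K : ℕ => A * (((K : ℝ) + 1) ^ N * q ^ K))
      = fun K : ℕ => (A * q⁻¹) * ((((K + 1 : ℕ)) : ℝ) ^ N * q ^ (K + 1)) := by
    funext K
    push_cast
    rw [pow_succ]
    field_simp
  rw [h3]
  simpa using h2.const_mul (A * q⁻¹)

lemma bseq_summable {A q : ℝ} (N : ℕ) (hq0 : 0 < q) (hq1 : q < 1) :
    Summable (fun K : ℕ => A * (((K : ℝ) + 1) ^ N * q ^ K)) := by
  have h1 : Summable (fun n : ℕ => (n : ℝ) ^ N * q ^ n) :=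
    summable_pow_mul_geometric_of_norm_lt_one N (by rwa [Real.norm_eq_abs, abs_of_pos hq0])
  have h2 : Summable (fun K : ℕ => (((K + 1 : ℕ)) : ℝ) ^ N * q ^ (K + 1)) :=
    h1.comp_injective (add_left_injective 1)
  have h3 : (fun K : ℕ => A * (((K : ℝ) + 1) ^ N * q ^ K))
      = fun K : ℕ => (A * q⁻¹) * ((((K + 1 : ℕ)) : ℝ) ^ N * q ^ (K + 1)) := by
    funext K
    push_cast
    rw [pow_succ]
    field_simp
  rw [h3]
  exact h2.mul_left _

lemma measure_le_ratio (N : ℕ) (lam : Fin N → ℝ) (hlam : ∀ i, 0 < lam i)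
    (w : Fin N → ℕ → ℝ) (hw : ∀ i n, 0 < w i n) (j : Fin N) (δ : ℝ)
    {Ω : Type*} [MeasurableSpace Ω] (P : Measure Ω)
    (η : ℕ → Ω → (Fin N → ℕ)) (K : ℕ)
    (hlaw : ∀ s : Fin N → ℕ,
      P {ω | η K ω = s} =
        ENNReal.ofReal
          (if ∑ i, s i = K then
            (∏ i, w i (s i) * lam i ^ (s i)) / condZ N lam w K
          else 0)) :
    P {ω | ((η K ω j : ℕ) : ℝ) ≤ (1 - δ) * K}
      ≤ ENNReal.ofReal (condS N lam w j δ K / condZ N lam w K) := by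
  classical
  set σ := {s : Fin N → ℕ // ((s j : ℕ) : ℝ) ≤ (1 - δ) * K} with hσ
  have hsubset : {ω | ((η K ω j : ℕ) : ℝ) ≤ (1 - δ) * K}
      ⊆ ⋃ s : σ, {ω | η K ω = s.1} := fun ω hω => Set.mem_iUnion.mpr ⟨⟨η K ω, hω⟩, rfl⟩
  have h1 : P {ω | ((η K ω j : ℕ) : ℝ) ≤ (1 - δ) * K}
      ≤ ∑' s : σ, P {ω | η K ω = s.1} :=
    (measure_mono hsubset).trans (measure_iUnion_le _)
  have h2 : ∀ s : σ, P {ω | η K ω = s.1}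
      = ENNReal.ofReal (if ∑ i, s.1 i = K then
          (∏ i, w i (s.1 i) * lam i ^ (s.1 i)) / condZ N lam w K else 0) :=
    fun s => hlaw s.1
  rw [tsum_congr h2] at h1
  haveI := aux_finite2 N K (fun ξ => ((ξ j : ℕ) : ℝ) ≤ (1 - δ) * K)
  letI : Fintype {ξ : Fin N → ℕ // (∑ i, ξ i = K) ∧ ((ξ j : ℕ) : ℝ) ≤ (1 - δ) * K} :=
    Fintype.ofFinite _
  set g : {ξ : Fin N → ℕ // (∑ i, ξ i = K) ∧ ((ξ j : ℕ) : ℝ) ≤ (1 - δ) * K} → σ :=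
    fun t => ⟨t.1, t.2.2⟩ with hg
  have hginj : Function.Injective g := by
    intro a b hab
    apply Subtype.ext
    exact congrArg (fun x : σ => x.1) hab
  have hsupp : Function.support (fun s : σ => ENNReal.ofReal (if ∑ i, s.1 i = K then
      (∏ i, w i (s.1 i) * lam i ^ (s.1 i)) / condZ N lam w K else 0)) ⊆ Set.range g := by
    intro s hs
    by_cases hc : ∑ i, s.1 i = K
    · exact ⟨⟨s.1, hc, s.2⟩, rfl⟩
    · exfalso
      apply hs
      simp [hc]
  have h3 := Function.Injective.tsum_eq hginj
    (f := fun s : σ => ENNReal.ofReal (if ∑ i, s.1 i = K then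
      (∏ i, w i (s.1 i) * lam i ^ (s.1 i)) / condZ N lam w K else 0)) hsupp
  rw [← h3] at h1
  have h4 : ∀ t : {ξ : Fin N → ℕ // (∑ i, ξ i = K) ∧ ((ξ j : ℕ) : ℝ) ≤ (1 - δ) * K},
      ENNReal.ofReal (if ∑ i, (g t).1 i = K then
        (∏ i, w i ((g t).1 i) * lam i ^ ((g t).1 i)) / condZ N lam w K else 0)
      = ENNReal.ofReal ((∏ i, w i (t.1 i) * lam i ^ (t.1 i)) / condZ N lam w K) := by
    intro t
    rw [if_pos t.2.1]
  rw [tsum_congr h4, tsum_fintype] at h1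
  have h5 : (∑ t : {ξ : Fin N → ℕ // (∑ i, ξ i = K) ∧ ((ξ j : ℕ) : ℝ) ≤ (1 - δ) * K},
      ENNReal.ofReal ((∏ i, w i (t.1 i) * lam i ^ (t.1 i)) / condZ N lam w K))
      = ENNReal.ofReal (∑ t : {ξ : Fin N → ℕ // (∑ i, ξ i = K) ∧ ((ξ j : ℕ) : ℝ) ≤ (1 - δ) * K},
        (∏ i, w i (t.1 i) * lam i ^ (t.1 i)) / condZ N lam w K) := by
    rw [ENNReal.ofReal_sum_of_nonneg]
    intro t _
    apply div_nonneg
    · exact Finset.prod_nonneg fun i _ => mul_nonneg (hw i _).le (pow_nonneg (hlam i).le _)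
    · exact le_of_lt (condZ_pos N K (Fin.pos j) lam hlam w hw)
  rw [h5] at h1
  have h6 : (∑ t : {ξ : Fin N → ℕ // (∑ i, ξ i = K) ∧ ((ξ j : ℕ) : ℝ) ≤ (1 - δ) * K},
      (∏ i, w i (t.1 i) * lam i ^ (t.1 i)) / condZ N lam w K)
      = condS N lam w j δ K / condZ N lam w K := by
    rw [condS, tsum_fintype, Finset.sum_div]
  rw [h6] at h1
  exact h1

lemma measure_badsum_zero (N : ℕ) (lam : Fin N → ℝ)
    (w : Fin N → ℕ → ℝ)
    {Ω : Type*} [MeasurableSpace Ω] (P : Measure Ω)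
    (η : ℕ → Ω → (Fin N → ℕ)) (K : ℕ)
    (hlaw : ∀ s : Fin N → ℕ,
      P {ω | η K ω = s} =
        ENNReal.ofReal
          (if ∑ i, s i = K then
            (∏ i, w i (s i) * lam i ^ (s i)) / condZ N lam w K
          else 0)) :
    P {ω | ¬ (∑ i, η K ω i = K)} = 0 := by
  classical
  have hsubset : {ω | ¬ (∑ i, η K ω i = K)}
      ⊆ ⋃ s : {s : Fin N → ℕ // ¬ (∑ i, s i = K)}, {ω | η K ω = s.1} :=
    fun ω hω => Set.mem_iUnion.mpr ⟨⟨η K ω, hω⟩, rfl⟩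
  have h1 : P {ω | ¬ (∑ i, η K ω i = K)}
      ≤ ∑' s : {s : Fin N → ℕ // ¬ (∑ i, s i = K)}, P {ω | η K ω = s.1} :=
    (measure_mono hsubset).trans (measure_iUnion_le _)
  have h2 : ∀ s : {s : Fin N → ℕ // ¬ (∑ i, s i = K)}, P {ω | η K ω = s.1} = 0 := by
    intro s
    rw [hlaw s.1, if_neg s.2]
    simp
  rw [tsum_congr h2] at h1
  simpa using h1

/-- **General condensation result for conditioned independent random variables, part b)**:
for subexponential weights `w_i` and `λ_N > max_{i<N} λ_i`, under the conditioned measure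
`μ^K(η) ∝ ∏_i w_i(η_i) λ_i^{η_i}` on `{∑_i η_i = K}`, for every `δ ∈ (0,1)` one has
`μ^K(η_N ≤ (1−δ)K) → 0` as `K → ∞`; moreover for random variables `η^K` with law `μ^K`
on a common probability space, `η^K_N / K → 1` almost surely. -/
theorem general_condensation_condensate_site
    (N : ℕ) (hN : 2 ≤ N)
    (lam : Fin N → ℝ) (hlam : ∀ i, 0 < lam i)
    (hmax : ∀ i : Fin N, (i : ℕ) + 1 < N → lam i < lam ⟨N - 1, by omega⟩)
    (w : Fin N → ℕ → ℝ) (hw : ∀ i n, 0 < w i n)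
    (hsub : ∀ i, Tendsto (fun n : ℕ => w i (n + 1) / w i n) atTop (𝓝 1))
    {Ω : Type*} [MeasurableSpace Ω] (P : Measure Ω) [IsProbabilityMeasure P]
    (η : ℕ → Ω → (Fin N → ℕ))
    (hlaw : ∀ K : ℕ, ∀ s : Fin N → ℕ,
      P {ω | η K ω = s} =
        ENNReal.ofReal
          (if ∑ i, s i = K then
            (∏ i, w i (s i) * lam i ^ (s i)) /
              (∑' ξ : {ξ : Fin N → ℕ // ∑ i, ξ i = K}, ∏ i, w i (ξ.1 i) * lam i ^ (ξ.1 i))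
          else 0)) :
    (∀ δ ∈ Set.Ioo (0 : ℝ) 1,
      Tendsto
        (fun K : ℕ =>
          (∑' ξ : {ξ : Fin N → ℕ //
              (∑ i, ξ i = K) ∧ ((ξ ⟨N - 1, by omega⟩ : ℕ) : ℝ) ≤ (1 - δ) * K},
            ∏ i, w i (ξ.1 i) * lam i ^ (ξ.1 i)) /
          (∑' ξ : {ξ : Fin N → ℕ // ∑ i, ξ i = K},
            ∏ i, w i (ξ.1 i) * lam i ^ (ξ.1 i)))
        atTop (𝓝 0)) ∧
    (∀ᵐ ω ∂P,
      Tendsto (fun K : ℕ => ((η K ω ⟨N - 1, by omega⟩ : ℕ) : ℝ) / K) atTop (𝓝 1)) := by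
  have hN1 : N - 1 < N := by omega
  have hj : ∀ i : Fin N, i ≠ ⟨N - 1, hN1⟩ → lam i < lam ⟨N - 1, hN1⟩ := by
    intro i hi
    apply hmax
    have h1 := i.isLt
    have h2 : (i : ℕ) ≠ N - 1 := fun h => hi (Fin.ext h)
    omega
  set j : Fin N := ⟨N - 1, hN1⟩ with hjdef
  have hlaw' : ∀ K : ℕ, ∀ s : Fin N → ℕ,
      P {ω | η K ω = s} =
        ENNReal.ofReal
          (if ∑ i, s i = K then
            (∏ i, w i (s i) * lam i ^ (s i)) / condZ N lam w K
          else 0) := hlaw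
  have hZ : ∀ K, 0 < condZ N lam w K :=
    fun K => condZ_pos N K (by omega) lam hlam w hw
  constructor
  · intro δ hδ
    show Tendsto (fun K : ℕ => condS N lam w j δ K / condZ N lam w K) atTop (𝓝 0)
    obtain ⟨A, q, hA, hq0, hq1, hb⟩ := key_bound N hN lam hlam j hj w hw hsub δ hδ.1 hδ.2
    apply squeeze_zero (g := fun K : ℕ => A * (((K : ℝ) + 1) ^ N * q ^ K))
    · intro K
      exact div_nonneg (condS_nonneg N K lam hlam w hw j δ) (hZ K).le
    · intro K
      rw [div_le_iff₀ (hZ K)]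
      exact hb K
    · exact bseq_tendsto N hq0 hq1
  · show ∀ᵐ ω ∂P, Tendsto (fun K : ℕ => ((η K ω j : ℕ) : ℝ) / K) atTop (𝓝 1)
    have hae1 : ∀ᵐ ω ∂P, ∀ K : ℕ, ∑ i, η K ω i = K := by
      rw [MeasureTheory.ae_all_iff]
      intro K
      exact (MeasureTheory.ae_iff).mpr (measure_badsum_zero N lam w P η K (hlaw' K))
    have hae2 : ∀ m : ℕ, ∀ᵐ ω ∂P, ∀ᶠ K in atTop,
        ω ∉ {ω : Ω | ((η K ω j : ℕ) : ℝ) ≤ (1 - (1 : ℝ) / (m + 2)) * K} := by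
      intro m
      have hδ0 : (0 : ℝ) < 1 / (m + 2) := by positivity
      have hδ1 : (1 : ℝ) / (m + 2) < 1 := by
        rw [div_lt_one (by positivity)]
        have : (0 : ℝ) ≤ (m : ℝ) := Nat.cast_nonneg m
        linarith
      obtain ⟨A, q, hA, hq0, hq1, hb⟩ :=
        key_bound N hN lam hlam j hj w hw hsub (1 / (m + 2)) hδ0 hδ1
      apply MeasureTheory.ae_eventually_notMem
      have hle : ∀ K : ℕ, P {ω : Ω | ((η K ω j : ℕ) : ℝ) ≤ (1 - (1 : ℝ) / (m + 2)) * K}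
          ≤ ENNReal.ofReal (A * (((K : ℝ) + 1) ^ N * q ^ K)) := by
        intro K
        refine (measure_le_ratio N lam hlam w hw j (1 / (m + 2)) P η K (hlaw' K)).trans ?_
        apply ENNReal.ofReal_le_ofReal
        rw [div_le_iff₀ (hZ K)]
        exact hb K
      have h7 : (∑' K : ℕ, P {ω : Ω | ((η K ω j : ℕ) : ℝ) ≤ (1 - (1 : ℝ) / (m + 2)) * K})
          ≤ ENNReal.ofReal (∑' K : ℕ, A * (((K : ℝ) + 1) ^ N * q ^ K)) := by
        refine (ENNReal.tsum_le_tsum hle).trans ?_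
        rw [ENNReal.ofReal_tsum_of_nonneg
          (fun K => mul_nonneg hA (mul_nonneg (by positivity) (pow_nonneg hq0.le _)))
          (bseq_summable N hq0 hq1)]
      exact ne_top_of_le_ne_top ENNReal.ofReal_ne_top h7
    have hae2' : ∀ᵐ ω ∂P, ∀ m : ℕ, ∀ᶠ K in atTop,
        ω ∉ {ω : Ω | ((η K ω j : ℕ) : ℝ) ≤ (1 - (1 : ℝ) / (m + 2)) * K} :=
      MeasureTheory.ae_all_iff.mpr hae2
    filter_upwards [hae1, hae2'] with ω h1 h2
    rw [Metric.tendsto_atTop]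
    intro ε hε
    obtain ⟨m, hm⟩ := exists_nat_gt (1 / ε)
    have hmε : (1 : ℝ) / (m + 2) < ε := by
      rw [div_lt_iff₀ (by positivity)]
      have hm' : 1 < (m : ℝ) * ε := by
        rw [div_lt_iff₀ hε] at hm
        linarith
      nlinarith
    obtain ⟨K₀, hK₀⟩ := eventually_atTop.mp (h2 m)
    refine ⟨max K₀ 1, fun K hK => ?_⟩
    have hK1 : 1 ≤ K := le_trans (le_max_right _ _) hK
    have hKpos : (0 : ℝ) < K := by
      have : (0 : ℕ) < K := hK1
      exact_mod_cast this
    have hup : ((η K ω j : ℕ) : ℝ) ≤ K := by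
      have h3 : η K ω j ≤ ∑ i, η K ω i :=
        Finset.single_le_sum (fun i _ => Nat.zero_le _) (Finset.mem_univ j)
      rw [h1 K] at h3
      exact_mod_cast h3
    have hlow : (1 - (1 : ℝ) / (m + 2)) * K < ((η K ω j : ℕ) : ℝ) := by
      have h4 := hK₀ K (le_trans (le_max_left _ _) hK)
      exact lt_of_not_ge h4
    rw [Real.dist_eq, abs_lt]
    constructor
    · have h5 : (1 - (1 : ℝ) / (m + 2)) < ((η K ω j : ℕ) : ℝ) / K := by
        rw [lt_div_iff₀ hKpos]
        exact hlow
      linarith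
    · have h6 : ((η K ω j : ℕ) : ℝ) / K ≤ 1 := by
        rw [div_le_one hKpos]
        exact hup
      linarith
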